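/- For w ∈ [0,1], let ρ_w := w • (outer product |ψ⁻⟩⟨ψ⁻|) + ((1−w)/4) • I₄, where ψ⁻ : (Fin 2 × Fin 2) → ℂ is the singlet vector with ψ⁻(0,1) = 1/√2, ψ⁻(1,0) = −1/√2, and ψ⁻ = 0 at the other two indices, and I₄ is the identity matrix on Fin 2 × Fin 2. Then ρ_w is a two-qubit density matrix, and ρ_w is entangled if and only if 1/3 < w. -/

import Mathlib

open Matrix Kronecker ComplexOrder

/-- Separability of a two-qubit state. -/
def Separable (ρ : Matrix (Fin 2 × Fin 2) (Fin 2 × Fin 2) ℂ) : Prop :=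
  ∃ (m : ℕ) (p : Fin m → ℝ) (ρA ρB : Fin m → Matrix (Fin 2) (Fin 2) ℂ),
    (∀ k, 0 ≤ p k) ∧ (∑ k, p k = 1) ∧
    (∀ k, (ρA k).PosSemidef ∧ (ρA k).trace = 1) ∧
    (∀ k, (ρB k).PosSemidef ∧ (ρB k).trace = 1) ∧
    ρ = ∑ k, (p k : ℂ) • (ρA k ⊗ₖ ρB k)

/-- The singlet vector `|ψ⁻⟩`. -/
noncomputable def psiMinus : Fin 2 × Fin 2 → ℂ := fun p =>
  if p = ((0 : Fin 2), (1 : Fin 2)) then ((1 / Real.sqrt 2 : ℝ) : ℂ)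
  else if p = ((1 : Fin 2), (0 : Fin 2)) then (-(1 / Real.sqrt 2 : ℝ) : ℂ)
  else 0

/-- The two-qubit Werner state. -/
noncomputable def wernerState (w : ℝ) :
    Matrix (Fin 2 × Fin 2) (Fin 2 × Fin 2) ℂ :=
  (w : ℂ) • Matrix.vecMulVec psiMinus (star psiMinus)
    + (((1 - w) / 4 : ℝ) : ℂ) • (1 : Matrix (Fin 2 × Fin 2) (Fin 2 × Fin 2) ℂ)

/-! ### Auxiliary lemmas -/

lemma sqrt2_inv_sq : (((Real.sqrt 2 : ℝ) : ℂ))⁻¹ ^ 2 = 1/2 := by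
  rw [inv_pow, ← Complex.ofReal_pow, Real.sq_sqrt (by norm_num : (0:ℝ) ≤ 2)]
  norm_num

lemma sqrt2c : ((Real.sqrt 2 : ℝ) : ℂ)⁻¹ * ((Real.sqrt 2 : ℝ) : ℂ)⁻¹ = 2⁻¹ := by
  rw [← mul_inv, ← Complex.ofReal_mul, Real.mul_self_sqrt (by norm_num)]
  norm_num

lemma sqrt2c' : ((Real.sqrt 2 : ℝ) : ℂ)⁻¹ ^ 2 = 2⁻¹ := by rw [sq, sqrt2c]

lemma outer_psd {n : Type*} [Fintype n] (v : n → ℂ) :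
    (Matrix.vecMulVec v (star v)).PosSemidef := by
  rw [Matrix.vecMulVec_eq Unit, ← Matrix.conjTranspose_replicateCol]
  exact Matrix.posSemidef_self_mul_conjTranspose _

lemma smul_psd {n : Type*} [Fintype n] {A : Matrix n n ℂ} (c : ℝ) (hc : 0 ≤ c)
    (hA : A.PosSemidef) : ((c : ℂ) • A).PosSemidef := by
  refine Matrix.PosSemidef.of_dotProduct_mulVec_nonneg ?_ ?_
  · show ((c:ℂ) • A)ᴴ = _
    rw [Matrix.conjTranspose_smul, hA.1]
    simp [Complex.conj_ofReal]
  · intro x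
    rw [Matrix.smul_mulVec, dotProduct_smul]
    rw [smul_eq_mul]
    exact mul_nonneg (by exact_mod_cast hc) (hA.dotProduct_mulVec_nonneg x)

lemma psd_det_nonneg {n : Type*} [Fintype n] [DecidableEq n] {A : Matrix n n ℂ}
    (hA : A.PosSemidef) : 0 ≤ A.det := by
  exact hA.det_nonneg

lemma psd_diag_nonneg {n : Type*} [Fintype n] [DecidableEq n] {A : Matrix n n ℂ}
    (hA : A.PosSemidef) (i : n) : 0 ≤ A i i := by
  have := hA.dotProduct_mulVec_nonneg (Pi.single i 1)
  simpa [dotProduct, Matrix.mulVec, Pi.single_apply] using this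

/-! ### Expectation value computations -/

lemma expect_eq (M : Matrix (Fin 2 × Fin 2) (Fin 2 × Fin 2) ℂ) :
    star psiMinus ⬝ᵥ M.mulVec psiMinus =
      (1/2 : ℂ) * (M (0,1) (0,1) - M (0,1) (1,0) - M (1,0) (0,1) + M (1,0) (1,0)) := by
  simp only [dotProduct, Matrix.mulVec, Fintype.sum_prod_type, Fin.sum_univ_two,
    psiMinus, Pi.star_apply]
  norm_num [Prod.ext_iff, Fin.ext_iff, Complex.conj_ofReal]
  ring_nf
  rw [sqrt2_inv_sq]
  ring

lemma werner_trace (w : ℝ) : (wernerState w).trace = 1 := by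
  simp only [wernerState, Matrix.trace_add, Matrix.trace_smul, Matrix.trace_one]
  have h : (Matrix.vecMulVec psiMinus (star psiMinus)).trace = 1 := by
    simp only [Matrix.trace, Matrix.diag, Matrix.vecMulVec_apply, Fintype.sum_prod_type,
      Fin.sum_univ_two, psiMinus, Pi.star_apply]
    norm_num [Prod.ext_iff, Fin.ext_iff, Complex.conj_ofReal]
    ring_nf
    rw [sqrt2_inv_sq]
    norm_num
  rw [h]
  simp only [Fintype.card_prod, Fintype.card_fin, smul_eq_mul]
  push_cast
  ring

lemma werner_expect (w : ℝ) :
    (star psiMinus ⬝ᵥ (wernerState w).mulVec psiMinus) = (((1 + 3*w)/4 : ℝ) : ℂ) := by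
  rw [expect_eq]
  simp only [wernerState, Matrix.add_apply, Matrix.smul_apply, Matrix.one_apply,
    Matrix.vecMulVec_apply, psiMinus, Pi.star_apply]
  norm_num [Prod.ext_iff, Fin.ext_iff, Complex.conj_ofReal]
  ring_nf
  rw [sqrt2_inv_sq]
  ring

/-- facts about a 2x2 density matrix -/
lemma density_facts (A : Matrix (Fin 2) (Fin 2) ℂ) (hA : A.PosSemidef) (hAt : A.trace = 1) :
    A 0 0 = ((A 0 0).re : ℂ) ∧ A 1 1 = ((A 1 1).re : ℂ) ∧
    0 ≤ (A 0 0).re ∧ 0 ≤ (A 1 1).re ∧ (A 0 0).re + (A 1 1).re = 1 ∧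
    A 1 0 = starRingEnd ℂ (A 0 1) ∧
    (A 0 1).re ^ 2 + (A 0 1).im ^ 2 ≤ (A 0 0).re * (A 1 1).re := by
  have h00 := psd_diag_nonneg hA 0
  have h11 := psd_diag_nonneg hA 1
  have h00' := Complex.le_def.mp h00
  have h11' := Complex.le_def.mp h11
  have e00 : A 0 0 = ((A 0 0).re : ℂ) := by
    rw [Complex.ext_iff]; constructor
    · simp
    · simpa using h00'.2.symm
  have e11 : A 1 1 = ((A 1 1).re : ℂ) := by
    rw [Complex.ext_iff]; constructor
    · simp
    · simpa using h11'.2.symm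
  have herm : A 1 0 = starRingEnd ℂ (A 0 1) := by
    have := hA.1
    rw [Matrix.IsHermitian] at this
    have := congrFun (congrFun this 1) 0
    simpa [Matrix.conjTranspose_apply] using this.symm
  have htr : (A 0 0).re + (A 1 1).re = 1 := by
    have := hAt
    rw [Matrix.trace_fin_two] at this
    have := congrArg Complex.re this
    simpa using this
  have hdet := psd_det_nonneg hA
  rw [Matrix.det_fin_two, herm] at hdet
  have hdet' := (Complex.le_def.mp hdet).1
  refine ⟨e00, e11, by simpa using h00'.1, by simpa using h11'.1, htr, herm, ?_⟩
  rw [e00, e11] at hdet'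
  simp only [Complex.sub_re, Complex.mul_re, Complex.ofReal_re, Complex.ofReal_im,
    Complex.conj_re, Complex.conj_im, Complex.zero_re] at hdet'
  nlinarith [hdet']

lemma prod_bound (A B : Matrix (Fin 2) (Fin 2) ℂ)
    (hA : A.PosSemidef) (hAt : A.trace = 1) (hB : B.PosSemidef) (hBt : B.trace = 1) :
    (star psiMinus ⬝ᵥ (A ⊗ₖ B).mulVec psiMinus).re ≤ 1/2 := by
  rw [expect_eq]
  simp only [Matrix.kroneckerMap_apply]
  obtain ⟨ea0, ea1, ha0, ha1, hat, haherm, hadet⟩ := density_facts A hA hAt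
  obtain ⟨eb0, eb1, hb0, hb1, hbt, hbherm, hbdet⟩ := density_facts B hB hBt
  rw [ea0, ea1, eb0, eb1, haherm, hbherm]
  obtain ⟨a, d, x, ha, hd, hx⟩ : ∃ a d x, (A 0 0).re = a ∧ (A 1 1).re = d ∧ A 0 1 = x :=
    ⟨_, _, _, rfl, rfl, rfl⟩
  obtain ⟨b, e, y, hb, he, hy⟩ : ∃ b e y, (B 0 0).re = b ∧ (B 1 1).re = e ∧ B 0 1 = y :=
    ⟨_, _, _, rfl, rfl, rfl⟩
  simp only [ha, hd, hx, hb, he, hy] at hadet hbdet hat hbt ha0 ha1 hb0 hb1 ⊢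
  simp only [Complex.mul_re, Complex.sub_re, Complex.add_re, Complex.ofReal_re,
    Complex.ofReal_im, Complex.conj_re, Complex.conj_im, Complex.sub_im, Complex.add_im,
    Complex.mul_im, Complex.one_re, Complex.one_im, Complex.div_re, Complex.div_im,
    Complex.normSq]
  norm_num
  have hS2 : (x.re*y.re + x.im*y.im)^2 ≤ (a*d)*(b*e) := by
    nlinarith [sq_nonneg (x.re*y.im - x.im*y.re),
      mul_le_mul hadet hbdet (by positivity) (mul_nonneg ha0 ha1)]
  have h_u : 0 ≤ a*b + d*e := by positivity
  have key : -(2*(x.re*y.re + x.im*y.im)) ≤ a*b + d*e := by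
    nlinarith [hS2, sq_nonneg (a*b - d*e), h_u]
  nlinarith [key, hat, hbt]

lemma expect_sum {m : ℕ} (M : Fin m → Matrix (Fin 2 × Fin 2) (Fin 2 × Fin 2) ℂ)
    (v : Fin 2 × Fin 2 → ℂ) :
    star v ⬝ᵥ (∑ k, M k).mulVec v = ∑ k, star v ⬝ᵥ (M k).mulVec v := by
  have h1 : (∑ k, M k).mulVec v = ∑ k, (M k).mulVec v := by
    ext i
    simp only [Matrix.mulVec, dotProduct, Matrix.sum_apply, Finset.sum_mul,
      Finset.sum_apply]
    exact Finset.sum_comm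
  rw [h1]
  simp only [dotProduct, Finset.sum_apply, Finset.mul_sum]
  exact Finset.sum_comm

lemma sep_bound {ρ : Matrix (Fin 2 × Fin 2) (Fin 2 × Fin 2) ℂ} (h : Separable ρ) :
    (star psiMinus ⬝ᵥ ρ.mulVec psiMinus).re ≤ 1/2 := by
  obtain ⟨m, p, ρA, ρB, hp0, hp1, hA, hB, rfl⟩ := h
  rw [expect_sum]
  rw [Complex.re_sum]
  have hle : ∀ k, (star psiMinus ⬝ᵥ ((p k : ℂ) • (ρA k ⊗ₖ ρB k)).mulVec psiMinus).re
      ≤ p k * (1/2) := by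
    intro k
    rw [Matrix.smul_mulVec, dotProduct_smul, smul_eq_mul]
    rw [Complex.mul_re]
    simp only [Complex.ofReal_re, Complex.ofReal_im, zero_mul, sub_zero]
    exact mul_le_mul_of_nonneg_left
      (prod_bound _ _ (hA k).1 (hA k).2 (hB k).1 (hB k).2) (hp0 k)
  calc ∑ k, (star psiMinus ⬝ᵥ ((p k : ℂ) • (ρA k ⊗ₖ ρB k)).mulVec psiMinus).re
      ≤ ∑ k, p k * (1/2) := Finset.sum_le_sum fun k _ => hle k
    _ = 1/2 := by rw [← Finset.sum_mul, hp1, one_mul]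

/-! ### The explicit separable decomposition -/

noncomputable def pvec (w : ℝ) : Fin 7 → ℝ := ![1-3*w, w/2, w/2, w/2, w/2, w/2, w/2]

noncomputable def sepA : Fin 7 → Matrix (Fin 2) (Fin 2) ℂ :=
  ![!![1/2,0;0,1/2], !![1,0;0,0], !![0,0;0,1], !![1/2,1/2;1/2,1/2],
    !![1/2,-(1/2);-(1/2),1/2], !![1/2,-(Complex.I/2); Complex.I/2,1/2],
    !![1/2, Complex.I/2; -(Complex.I/2),1/2]]

noncomputable def sepB : Fin 7 → Matrix (Fin 2) (Fin 2) ℂ :=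
  ![!![1/2,0;0,1/2], !![0,0;0,1], !![1,0;0,0], !![1/2,-(1/2);-(1/2),1/2],
    !![1/2,1/2;1/2,1/2], !![1/2, Complex.I/2; -(Complex.I/2),1/2],
    !![1/2,-(Complex.I/2); Complex.I/2,1/2]]

noncomputable def cc : ℂ := ((Real.sqrt 2)⁻¹ : ℝ)

lemma psd_M0 : (!![1/2,0;0,1/2] : Matrix (Fin 2) (Fin 2) ℂ).PosSemidef := by
  have h : (!![1/2,0;0,1/2] : Matrix (Fin 2) (Fin 2) ℂ)
      = ((1/2 : ℝ) : ℂ) • (1 : Matrix (Fin 2) (Fin 2) ℂ) := by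
    ext i j
    fin_cases i <;> fin_cases j <;> simp [Matrix.one_apply] <;> norm_num
  rw [h]
  exact smul_psd _ (by norm_num) Matrix.PosSemidef.one

lemma psd_P0 : (!![1,0;0,0] : Matrix (Fin 2) (Fin 2) ℂ).PosSemidef := by
  have h : (!![1,0;0,0] : Matrix (Fin 2) (Fin 2) ℂ)
      = Matrix.vecMulVec ![1,0] (star ![1,0]) := by
    ext i j
    fin_cases i <;> fin_cases j <;> simp [Matrix.vecMulVec_apply]
  rw [h]; exact outer_psd _

lemma psd_P1 : (!![0,0;0,1] : Matrix (Fin 2) (Fin 2) ℂ).PosSemidef := by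
  have h : (!![0,0;0,1] : Matrix (Fin 2) (Fin 2) ℂ)
      = Matrix.vecMulVec ![0,1] (star ![0,1]) := by
    ext i j
    fin_cases i <;> fin_cases j <;> simp [Matrix.vecMulVec_apply]
  rw [h]; exact outer_psd _

lemma psd_Xp : (!![1/2,1/2;1/2,1/2] : Matrix (Fin 2) (Fin 2) ℂ).PosSemidef := by
  have h : (!![1/2,1/2;1/2,1/2] : Matrix (Fin 2) (Fin 2) ℂ)
      = Matrix.vecMulVec ![cc, cc] (star ![cc, cc]) := by
    ext i j
    fin_cases i <;> fin_cases j <;>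
      simp [Matrix.vecMulVec_apply, cc, Complex.conj_ofReal, sqrt2c]
  rw [h]; exact outer_psd _

lemma psd_Xm : (!![1/2,-(1/2);-(1/2),1/2] : Matrix (Fin 2) (Fin 2) ℂ).PosSemidef := by
  have h : (!![1/2,-(1/2);-(1/2),1/2] : Matrix (Fin 2) (Fin 2) ℂ)
      = Matrix.vecMulVec ![cc, -cc] (star ![cc, -cc]) := by
    ext i j
    fin_cases i <;> fin_cases j <;>
      simp [Matrix.vecMulVec_apply, cc, Complex.conj_ofReal, sqrt2c]
  rw [h]; exact outer_psd _

lemma psd_Yp : (!![1/2,-(Complex.I/2); Complex.I/2,1/2]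
    : Matrix (Fin 2) (Fin 2) ℂ).PosSemidef := by
  have h : (!![1/2,-(Complex.I/2); Complex.I/2,1/2] : Matrix (Fin 2) (Fin 2) ℂ)
      = Matrix.vecMulVec ![cc, cc * Complex.I] (star ![cc, cc * Complex.I]) := by
    ext i j
    fin_cases i <;> fin_cases j <;>
      simp [Matrix.vecMulVec_apply, cc, Complex.conj_ofReal, sqrt2c, mul_comm, mul_assoc,
        mul_left_comm] <;>
      ring_nf <;> simp [Complex.I_sq, sqrt2c] <;> ring_nf
  rw [h]; exact outer_psd _

lemma psd_Ym : (!![1/2, Complex.I/2; -(Complex.I/2),1/2]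
    : Matrix (Fin 2) (Fin 2) ℂ).PosSemidef := by
  have h : (!![1/2, Complex.I/2; -(Complex.I/2),1/2] : Matrix (Fin 2) (Fin 2) ℂ)
      = Matrix.vecMulVec ![cc, -(cc * Complex.I)] (star ![cc, -(cc * Complex.I)]) := by
    ext i j
    fin_cases i <;> fin_cases j <;>
      simp [Matrix.vecMulVec_apply, cc, Complex.conj_ofReal, sqrt2c, mul_comm, mul_assoc,
        mul_left_comm] <;>
      ring_nf <;> simp [Complex.I_sq, sqrt2c] <;> ring_nf
  rw [h]; exact outer_psd _

lemma sepA_props : ∀ k, (sepA k).PosSemidef ∧ (sepA k).trace = 1 := by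
  intro k
  fin_cases k
  · exact ⟨psd_M0, by rw [Matrix.trace_fin_two]; exact show (1/2 : ℂ) + 1/2 = 1 by norm_num⟩
  · exact ⟨psd_P0, by rw [Matrix.trace_fin_two]; exact show (1 : ℂ) + 0 = 1 by norm_num⟩
  · exact ⟨psd_P1, by rw [Matrix.trace_fin_two]; exact show (0 : ℂ) + 1 = 1 by norm_num⟩
  · exact ⟨psd_Xp, by rw [Matrix.trace_fin_two]; exact show (1/2 : ℂ) + 1/2 = 1 by norm_num⟩
  · exact ⟨psd_Xm, by rw [Matrix.trace_fin_two]; exact show (1/2 : ℂ) + 1/2 = 1 by norm_num⟩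
  · exact ⟨psd_Yp, by rw [Matrix.trace_fin_two]; exact show (1/2 : ℂ) + 1/2 = 1 by norm_num⟩
  · exact ⟨psd_Ym, by rw [Matrix.trace_fin_two]; exact show (1/2 : ℂ) + 1/2 = 1 by norm_num⟩

lemma sepB_props : ∀ k, (sepB k).PosSemidef ∧ (sepB k).trace = 1 := by
  intro k
  fin_cases k
  · exact ⟨psd_M0, by rw [Matrix.trace_fin_two]; exact show (1/2 : ℂ) + 1/2 = 1 by norm_num⟩
  · exact ⟨psd_P1, by rw [Matrix.trace_fin_two]; exact show (0 : ℂ) + 1 = 1 by norm_num⟩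
  · exact ⟨psd_P0, by rw [Matrix.trace_fin_two]; exact show (1 : ℂ) + 0 = 1 by norm_num⟩
  · exact ⟨psd_Xm, by rw [Matrix.trace_fin_two]; exact show (1/2 : ℂ) + 1/2 = 1 by norm_num⟩
  · exact ⟨psd_Xp, by rw [Matrix.trace_fin_two]; exact show (1/2 : ℂ) + 1/2 = 1 by norm_num⟩
  · exact ⟨psd_Ym, by rw [Matrix.trace_fin_two]; exact show (1/2 : ℂ) + 1/2 = 1 by norm_num⟩
  · exact ⟨psd_Yp, by rw [Matrix.trace_fin_two]; exact show (1/2 : ℂ) + 1/2 = 1 by norm_num⟩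

set_option maxHeartbeats 3000000 in
lemma decomp (w : ℝ) :
    wernerState w = ∑ k, ((pvec w k : ℝ) : ℂ) • (sepA k ⊗ₖ sepB k) := by
  ext ⟨i1,i2⟩ ⟨j1,j2⟩
  simp only [Matrix.sum_apply, Fin.sum_univ_seven, Matrix.smul_apply,
    Matrix.kroneckerMap_apply, smul_eq_mul]
  rw [show pvec w 0 = 1-3*w from rfl,
    show sepA 0 = (!![1/2,0;0,1/2] : Matrix (Fin 2) (Fin 2) ℂ) from rfl,
    show sepB 0 = (!![1/2,0;0,1/2] : Matrix (Fin 2) (Fin 2) ℂ) from rfl,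
    show pvec w 1 = w/2 from rfl,
    show sepA 1 = (!![1,0;0,0] : Matrix (Fin 2) (Fin 2) ℂ) from rfl,
    show sepB 1 = (!![0,0;0,1] : Matrix (Fin 2) (Fin 2) ℂ) from rfl,
    show pvec w 2 = w/2 from rfl,
    show sepA 2 = (!![0,0;0,1] : Matrix (Fin 2) (Fin 2) ℂ) from rfl,
    show sepB 2 = (!![1,0;0,0] : Matrix (Fin 2) (Fin 2) ℂ) from rfl,
    show pvec w 3 = w/2 from rfl,
    show sepA 3 = (!![1/2,1/2;1/2,1/2] : Matrix (Fin 2) (Fin 2) ℂ) from rfl,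
    show sepB 3 = (!![1/2,-(1/2);-(1/2),1/2] : Matrix (Fin 2) (Fin 2) ℂ) from rfl,
    show pvec w 4 = w/2 from rfl,
    show sepA 4 = (!![1/2,-(1/2);-(1/2),1/2] : Matrix (Fin 2) (Fin 2) ℂ) from rfl,
    show sepB 4 = (!![1/2,1/2;1/2,1/2] : Matrix (Fin 2) (Fin 2) ℂ) from rfl,
    show pvec w 5 = w/2 from rfl,
    show sepA 5 = (!![1/2,-(Complex.I/2); Complex.I/2,1/2] : Matrix (Fin 2) (Fin 2) ℂ) from rfl,
    show sepB 5 = (!![1/2, Complex.I/2; -(Complex.I/2),1/2] : Matrix (Fin 2) (Fin 2) ℂ) from rfl,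
    show pvec w 6 = w/2 from rfl,
    show sepA 6 = (!![1/2, Complex.I/2; -(Complex.I/2),1/2] : Matrix (Fin 2) (Fin 2) ℂ) from rfl,
    show sepB 6 = (!![1/2,-(Complex.I/2); Complex.I/2,1/2] : Matrix (Fin 2) (Fin 2) ℂ) from rfl]
  simp only [wernerState, Matrix.add_apply, Matrix.smul_apply, Matrix.vecMulVec_apply,
    Pi.star_apply, Matrix.one_apply, psiMinus, smul_eq_mul]
  fin_cases i1 <;> fin_cases i2 <;> fin_cases j1 <;> fin_cases j2 <;>
    norm_num [Prod.ext_iff, Fin.ext_iff, Complex.conj_ofReal, Matrix.cons_val',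
      Matrix.cons_val_zero, Matrix.cons_val_one, Matrix.head_cons, Matrix.empty_val',
      Matrix.cons_val_fin_one] <;>
    (try push_cast) <;> (try ring_nf) <;> (try rw [sqrt2c']) <;> (try push_cast) <;>
    (try ring_nf) <;> (try ring) <;> (try norm_num)
  all_goals ring

lemma pvec_nonneg {w : ℝ} (hw : w ≤ 1/3) (hw0 : 0 ≤ w) : ∀ k, 0 ≤ pvec w k := by
  intro k
  fin_cases k
  · exact (by linarith : (0:ℝ) ≤ 1-3*w)
  all_goals exact (by linarith : (0:ℝ) ≤ w/2)

lemma pvec_sum (w : ℝ) : ∑ k, pvec w k = 1 := by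
  rw [Fin.sum_univ_seven]
  show (1-3*w) + w/2 + w/2 + w/2 + w/2 + w/2 + w/2 = 1
  ring

theorem werner_state_entangled_iff (w : ℝ) (hw0 : 0 ≤ w) (hw1 : w ≤ 1) :
    ((wernerState w).PosSemidef ∧ (wernerState w).trace = 1) ∧
    (¬ Separable (wernerState w) ↔ 1 / 3 < w) := by
  refine ⟨⟨?_, werner_trace w⟩, ?_, ?_⟩
  · exact Matrix.PosSemidef.add (smul_psd w hw0 (outer_psd psiMinus))
      (smul_psd ((1-w)/4) (by linarith) Matrix.PosSemidef.one)
  · intro hns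
    by_contra hle
    push_neg at hle
    exact hns ⟨7, pvec w, sepA, sepB, pvec_nonneg hle hw0, pvec_sum w,
      sepA_props, sepB_props, decomp w⟩
  · intro h13 hsep
    have h1 := sep_bound hsep
    rw [werner_expect] at h1
    rw [Complex.ofReal_re] at h1
    linarith
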